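/- If π and π′ are nonnesting partitions of [n] such that for every c ∈ [n] and every s ≥ 1, π has a block with minimum element c and cardinality s if and only if π′ does, then π = π′. In other words, a nonnesting partition of [n] is uniquely determined by the set of minima of its blocks together with the assignment to each minimum of the size of its block. -/

import Mathlib

/-- `i` and `j` lie in the same block of the set partition `π` of `[n]`. -/
def SameBlock {n : ℕ} (π : Finpartition (Finset.univ : Finset (Fin n)))
    (i j : Fin n) : Prop :=
  ∃ B ∈ π.parts, i ∈ B ∧ j ∈ B

/-- `(i,j)` is an arc of the set partition `π`. -/
def IsArc {n : ℕ} (π : Finpartition (Finset.univ : Finset (Fin n)))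
    (i j : Fin n) : Prop :=
  i < j ∧ SameBlock π i j ∧ ∀ k : Fin n, SameBlock π i k → ¬(i < k ∧ k < j)

/-- The set partition `π` is nonnesting. -/
def IsNonnesting {n : ℕ} (π : Finpartition (Finset.univ : Finset (Fin n))) : Prop :=
  ∀ i j r s : Fin n, IsArc π i j → IsArc π r s → r ≤ i → j ≤ s → i = r ∧ j = s

open Finset

section Aux

variable {n : ℕ} (π π' : Finpartition (Finset.univ : Finset (Fin n)))

/-- The block of `π` containing `i`. -/
def blk (i : Fin n) : Finset (Fin n) := π.part i

lemma mem_blk (i : Fin n) : i ∈ blk π i := π.mem_part (mem_univ i)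

lemma blk_mem (i : Fin n) : blk π i ∈ π.parts := π.part_mem.2 (mem_univ i)

lemma blk_nonempty (i : Fin n) : (blk π i).Nonempty := ⟨i, mem_blk π i⟩

variable {π π'}

lemma blk_eq_of_mem {i j : Fin n} (hj : j ∈ blk π i) : blk π j = blk π i :=
  π.part_eq_of_mem (blk_mem π i) hj

lemma sameBlock_iff {i j : Fin n} : SameBlock π i j ↔ j ∈ blk π i := by
  constructor
  · rintro ⟨B, hB, hi, hj⟩
    have : blk π i = B := π.part_eq_of_mem hB hi
    rw [this]; exact hj
  · exact fun hj => ⟨blk π i, blk_mem π i, mem_blk π i, hj⟩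

/-- Existence of the successor arc. -/
lemma arc_succ {i x : Fin n} (hx : x ∈ blk π i) (hix : i < x) :
    ∃ j, IsArc π i j ∧ j ≤ x := by
  set S : Finset (Fin n) := (blk π i).filter (i < ·) with hS
  have hxS : x ∈ S := by simp [hS, hx, hix]
  have hSne : S.Nonempty := ⟨x, hxS⟩
  refine ⟨S.min' hSne, ⟨?_, ?_, ?_⟩, min'_le _ _ hxS⟩
  · exact (mem_filter.1 (S.min'_mem hSne)).2
  · exact sameBlock_iff.2 (mem_filter.1 (S.min'_mem hSne)).1
  · rintro k hk ⟨h1, h2⟩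
    have : k ∈ S := by simp [hS, sameBlock_iff.1 hk, h1]
    exact absurd (S.min'_le _ this) (not_le.2 h2)

/-- Existence of the predecessor arc. -/
lemma arc_pred {j x : Fin n} (hx : x ∈ blk π j) (hxj : x < j) :
    ∃ p, IsArc π p j ∧ x ≤ p := by
  set S : Finset (Fin n) := (blk π j).filter (· < j) with hS
  have hxS : x ∈ S := by simp [hS, hx, hxj]
  have hSne : S.Nonempty := ⟨x, hxS⟩
  set p := S.max' hSne with hp
  have hpS : p ∈ S := S.max'_mem hSne
  have hpb : p ∈ blk π j := (mem_filter.1 hpS).1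
  refine ⟨p, ⟨(mem_filter.1 hpS).2, ?_, ?_⟩, le_max' _ _ hxS⟩
  · exact ⟨blk π j, blk_mem π j, hpb, mem_blk π j⟩
  · rintro k hk ⟨h1, h2⟩
    have hkb : k ∈ blk π j := by
      have := sameBlock_iff.1 hk
      rwa [blk_eq_of_mem hpb] at this
    have : k ∈ S := by simp [hS, hkb, h2]
    exact absurd (S.le_max' _ this) (not_le.2 h1)

lemma arc_mem_right {i j : Fin n} (h : IsArc π i j) : j ∈ blk π i := sameBlock_iff.1 h.2.1

lemma arc_right_unique {i j j' : Fin n} (h : IsArc π i j) (h' : IsArc π i j') : j = j' := by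
  by_contra hne
  rcases lt_or_gt_of_ne hne with hlt | hlt
  · exact h'.2.2 j h.2.1 ⟨h.1, hlt⟩
  · exact h.2.2 j' h'.2.1 ⟨h'.1, hlt⟩

lemma arc_left_unique {i i' j : Fin n} (h : IsArc π i j) (h' : IsArc π i' j) : i = i' := by
  have hib : j ∈ blk π i := arc_mem_right h
  have hib' : j ∈ blk π i' := arc_mem_right h'
  have hblk : blk π i = blk π i' := by rw [← blk_eq_of_mem hib, ← blk_eq_of_mem hib']
  by_contra hne
  rcases lt_or_gt_of_ne hne with hlt | hlt
  · refine h.2.2 i' ?_ ⟨hlt, h'.1⟩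
    exact sameBlock_iff.2 (hblk ▸ mem_blk π i')
  · refine h'.2.2 i ?_ ⟨hlt, h.1⟩
    exact sameBlock_iff.2 (hblk.symm ▸ mem_blk π i)

/-- Size of the block with minimum `c`, or `0` if `c` is not a block minimum. -/
noncomputable def msize (π : Finpartition (Finset.univ : Finset (Fin n))) (c : Fin n) : ℕ :=
  if (blk π c).min' (blk_nonempty π c) = c then (blk π c).card else 0

/-- The part of the block of `i` consisting of elements `≤ i`. -/
def blkLE (π : Finpartition (Finset.univ : Finset (Fin n))) (i : Fin n) : Finset (Fin n) :=
  (blk π i).filter (· ≤ i)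

lemma mem_blkLE (i : Fin n) : i ∈ blkLE π i := by
  simp [blkLE, mem_blk]

lemma blkLE_subset (i : Fin n) : blkLE π i ⊆ blk π i := filter_subset _ _

end Aux

section Main

variable {n : ℕ} {π π' : Finpartition (Finset.univ : Finset (Fin n))}

lemma min'_eq_of_eq {s t : Finset (Fin n)} (h : s = t) (hs : s.Nonempty) :
    s.min' hs = t.min' (h ▸ hs) := by subst h; rfl

lemma min'_blkLE (i : Fin n) :
    (blk π i).min' (blk_nonempty π i) = (blkLE π i).min' ⟨i, mem_blkLE i⟩ := by
  apply le_antisymm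
  · exact min'_le _ _ (blkLE_subset i (min'_mem _ _))
  · apply min'_le
    exact mem_filter.2 ⟨min'_mem _ _, min'_le _ _ (mem_blk π i)⟩

lemma hasSucc_iff_card (i : Fin n) :
    (∃ t, IsArc π i t) ↔ (blkLE π i).card < (blk π i).card := by
  constructor
  · rintro ⟨t, ht⟩
    have htb : t ∈ blk π i := arc_mem_right ht
    have htn : t ∉ blkLE π i := by
      simp only [blkLE, mem_filter]
      rintro ⟨-, hle⟩
      exact absurd ht.1 (not_lt.2 hle)
    exact card_lt_card ((ssubset_iff_of_subset (blkLE_subset i)).2 ⟨t, htb, htn⟩)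
  · intro hcard
    have hne : blkLE π i ≠ blk π i := fun e => by rw [e] at hcard; exact lt_irrefl _ hcard
    obtain ⟨x, hxb, hxn⟩ := (ssubset_iff_of_subset (blkLE_subset i)).1
      (Finset.ssubset_iff_subset_ne.2 ⟨blkLE_subset i, hne⟩)
    have hix : i < x := by
      by_contra hle
      exact hxn (mem_filter.2 ⟨hxb, not_lt.1 hle⟩)
    obtain ⟨j, hj, -⟩ := arc_succ hxb hix
    exact ⟨j, hj⟩

lemma msize_blk_min (i : Fin n) :
    msize π ((blk π i).min' (blk_nonempty π i)) = (blk π i).card := by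
  set c := (blk π i).min' (blk_nonempty π i) with hc
  have hcb : c ∈ blk π i := min'_mem _ _
  have hbc : blk π c = blk π i := blk_eq_of_mem hcb
  have h1 : (blk π c).min' (blk_nonempty π c) = c := by
    apply le_antisymm (min'_le _ _ (mem_blk π c))
    apply le_min'
    intro y hy
    rw [hbc] at hy
    exact hc ▸ min'_le _ _ hy
  rw [msize, if_pos h1, hbc]

lemma min_eq_of_msize_pos {c : Fin n} (h : 1 ≤ msize π c) :
    (blk π c).min' (blk_nonempty π c) = c := by
  by_contra hne
  rw [msize, if_neg hne] at h
  exact absurd h (by norm_num)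

lemma msize_eq_card_of_min {c : Fin n} (h : (blk π c).min' (blk_nonempty π c) = c) :
    msize π c = (blk π c).card := by rw [msize, if_pos h]

lemma msize_transfer_aux
    (h1 : ∀ c : Fin n, ∀ s : ℕ, 1 ≤ s →
      (∃ B ∈ π.parts, B.card = s ∧ ∃ hB : B.Nonempty, B.min' hB = c) →
      (∃ B ∈ π'.parts, B.card = s ∧ ∃ hB : B.Nonempty, B.min' hB = c))
    (c : Fin n) (hc : 1 ≤ msize π c) : msize π' c = msize π c := by
  have hmin := min_eq_of_msize_pos hc
  have hcard := msize_eq_card_of_min hmin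
  obtain ⟨B', hB', hcard', hne', hmin'⟩ := h1 c (msize π c) hc
    ⟨blk π c, blk_mem π c, hcard.symm, blk_nonempty π c, hmin⟩
  have hcB' : c ∈ B' := hmin' ▸ B'.min'_mem hne'
  have hblk' : blk π' c = B' := π'.part_eq_of_mem hB' hcB'
  have hmin'' : (blk π' c).min' (blk_nonempty π' c) = c := by
    rw [min'_eq_of_eq hblk' (blk_nonempty π' c)]
    exact hmin'
  rw [msize_eq_card_of_min hmin'', hblk', hcard']

lemma msize_transfer
    (h : ∀ c : Fin n, ∀ s : ℕ, 1 ≤ s →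
      ((∃ B ∈ π.parts, B.card = s ∧ ∃ hB : B.Nonempty, B.min' hB = c) ↔
        (∃ B ∈ π'.parts, B.card = s ∧ ∃ hB : B.Nonempty, B.min' hB = c)))
    (c : Fin n) : msize π c = msize π' c := by
  rcases Nat.eq_zero_or_pos (msize π c) with h0 | h1
  · rcases Nat.eq_zero_or_pos (msize π' c) with h0' | h1'
    · rw [h0, h0']
    · have := msize_transfer_aux (π := π') (π' := π)
        (fun c s hs => (h c s hs).2) c h1'
      omega
  · exact (msize_transfer_aux (fun c s hs => (h c s hs).1) c h1).symm

lemma blkLE_singleton {i : Fin n} (h : ¬∃ p, IsArc π p i) : blkLE π i = {i} := by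
  ext x
  simp only [blkLE, mem_filter, mem_singleton]
  constructor
  · rintro ⟨hxb, hxi⟩
    rcases lt_or_eq_of_le hxi with hlt | heq
    · obtain ⟨p, hp, -⟩ := arc_pred hxb hlt
      exact absurd ⟨p, hp⟩ h
    · exact heq
  · rintro rfl
    exact ⟨mem_blk π _, le_rfl⟩

lemma blkLE_step {p i : Fin n} (h : IsArc π p i) :
    blkLE π i = insert i (blkLE π p) := by
  have hpi : i ∈ blk π p := arc_mem_right h
  have hblk : blk π i = blk π p := blk_eq_of_mem hpi
  ext x
  simp only [blkLE, mem_filter, mem_insert, hblk]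
  constructor
  · rintro ⟨hxb, hxi⟩
    rcases lt_or_eq_of_le hxi with hlt | heq
    · right
      refine ⟨hxb, ?_⟩
      by_contra hpx
      exact h.2.2 x (sameBlock_iff.2 hxb) ⟨not_le.1 hpx, hlt⟩
    · exact Or.inl heq
  · rintro (rfl | ⟨hxb, hxp⟩)
    · exact ⟨hpi, le_rfl⟩  -- x = i case
    · exact ⟨hxb, le_trans hxp (le_of_lt h.1)⟩

lemma blkLE_agree_aux : ∀ (N : ℕ) (i : Fin n), (i : ℕ) < N →
    (∀ b : Fin n, b ≤ i → ∀ a, (IsArc π a b ↔ IsArc π' a b)) →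
    blkLE π i = blkLE π' i := by
  intro N
  induction N with
  | zero => exact fun i hi => absurd hi (Nat.not_lt_zero _)
  | succ N IH =>
    intro i hi hyp
    by_cases hp : ∃ p, IsArc π p i
    · obtain ⟨p, hparc⟩ := hp
      have hparc' : IsArc π' p i := (hyp i le_rfl p).1 hparc
      have hpIH : blkLE π p = blkLE π' p := by
        refine IH p (by have := hparc.1; omega) (fun b hb a => hyp b ?_ a)
        exact le_trans hb (le_of_lt hparc.1)
      rw [blkLE_step hparc, blkLE_step hparc', hpIH]
    · have hp' : ¬∃ p, IsArc π' p i := fun ⟨p, hp'⟩ => hp ⟨p, (hyp i le_rfl p).2 hp'⟩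
      rw [blkLE_singleton hp, blkLE_singleton hp']

lemma blkLE_agree (i : Fin n)
    (hyp : ∀ b : Fin n, b ≤ i → ∀ a, (IsArc π a b ↔ IsArc π' a b)) :
    blkLE π i = blkLE π' i :=
  blkLE_agree_aux n i i.isLt hyp

end Main

section Core

variable {n : ℕ} {π π' : Finpartition (Finset.univ : Finset (Fin n))}

/-- `i` is "open" at `j`: it has an arc reaching to `j` or beyond. -/
def Needs (π : Finpartition (Finset.univ : Finset (Fin n))) (i j : Fin n) : Prop :=
  i < j ∧ ∃ t, IsArc π i t ∧ j ≤ t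

lemma needs_iff {i j : Fin n} :
    Needs π i j ↔ i < j ∧ (∃ t, IsArc π i t) ∧ ∀ k, k < j → ¬IsArc π i k := by
  constructor
  · rintro ⟨hij, t, ht, hjt⟩
    refine ⟨hij, ⟨t, ht⟩, fun k hk hak => ?_⟩
    have := arc_right_unique ht hak
    subst this
    exact absurd hjt (not_le.2 hk)
  · rintro ⟨hij, ⟨t, ht⟩, hk⟩
    refine ⟨hij, t, ht, ?_⟩
    by_contra hlt
    exact hk t (not_le.1 hlt) ht

lemma needs_min (hπ : IsNonnesting π) {p j : Fin n} (hparc : IsArc π p j) :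
    ∀ a, Needs π a j → p ≤ a := by
  rintro a ⟨haj, t, hat, hjt⟩
  by_contra hlt
  have hap : a < p := not_le.1 hlt
  obtain ⟨hpa, -⟩ := hπ p j a t hparc hat (le_of_lt hap) hjt
  exact absurd hpa.symm (ne_of_lt hap)

lemma needs_transfer (hm : ∀ c, msize π c = msize π' c) {j : Fin n}
    (IH : ∀ b : Fin n, b < j → ∀ a, (IsArc π a b ↔ IsArc π' a b)) (a : Fin n) :
    Needs π a j ↔ Needs π' a j := by
  rw [needs_iff, needs_iff]
  by_cases haj : a < j
  · have hyp : ∀ b : Fin n, b ≤ a → ∀ c, (IsArc π c b ↔ IsArc π' c b) :=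
      fun b hb c => IH b (lt_of_le_of_lt hb haj) c
    have hble : blkLE π a = blkLE π' a := blkLE_agree a hyp
    have hmin : (blk π a).min' (blk_nonempty π a) = (blk π' a).min' (blk_nonempty π' a) := by
      rw [min'_blkLE a, min'_blkLE a]; exact min'_eq_of_eq hble _
    have hcard : (blk π a).card = (blk π' a).card := by
      rw [← msize_blk_min (π := π) a, ← msize_blk_min (π := π') a, hmin, hm]
    have hcardLE : (blkLE π a).card = (blkLE π' a).card := by rw [hble]
    have hsucc : (∃ t, IsArc π a t) ↔ (∃ t, IsArc π' a t) := by
      rw [hasSucc_iff_card, hasSucc_iff_card, hcard, hcardLE]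
    have hks : (∀ k, k < j → ¬IsArc π a k) ↔ (∀ k, k < j → ¬IsArc π' a k) := by
      constructor
      · intro hh k hk hak
        exact hh k hk ((IH k hk a).2 hak)
      · intro hh k hk hak
        exact hh k hk ((IH k hk a).1 hak)
    rw [hsucc, hks]
  · simp [haj]

lemma no_arc_into_min {j : Fin n} (hmin : ¬∃ x ∈ blk π j, x < j) {i : Fin n} :
    ¬IsArc π i j := by
  intro harc
  have hjb : j ∈ blk π i := arc_mem_right harc
  have : i ∈ blk π j := by rw [blk_eq_of_mem hjb]; exact mem_blk π i
  exact hmin ⟨i, this, harc.1⟩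

lemma arcs_agree_aux (hm : ∀ c, msize π c = msize π' c)
    (hπ : IsNonnesting π) (hπ' : IsNonnesting π') :
    ∀ (N : ℕ) (j : Fin n), (j : ℕ) < N → ∀ i, (IsArc π i j ↔ IsArc π' i j) := by
  intro N
  induction N with
  | zero => exact fun j hj => absurd hj (Nat.not_lt_zero _)
  | succ N IHN =>
    intro j hj i
    have IH : ∀ b : Fin n, b < j → ∀ a, (IsArc π a b ↔ IsArc π' a b) := by
      intro b hb a
      refine IHN b ?_ a
      have hb' : (b : ℕ) < (j : ℕ) := hb
      omega
    by_cases hmin : ∃ x ∈ blk π j, x < j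
    · -- `j` is not the minimum of its block, in either partition
      obtain ⟨x, hxb, hxj⟩ := hmin
      have hms0 : msize π j = 0 := by
        rw [msize, if_neg]
        intro he
        exact absurd (he ▸ min'_le _ _ hxb) (not_le.2 hxj)
      have hms0' : msize π' j = 0 := by rw [← hm, hms0]
      have hmin'lt : (blk π' j).min' (blk_nonempty π' j) < j := by
        rcases lt_or_eq_of_le (min'_le _ _ (mem_blk π' j)) with hlt | heq
        · exact hlt
        · rw [msize, if_pos heq] at hms0'
          exact absurd hms0' (Finset.card_ne_zero_of_mem (mem_blk π' j))
      obtain ⟨p, hparc, -⟩ := arc_pred hxb hxj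
      obtain ⟨p', hparc', -⟩ := arc_pred (min'_mem (blk π' j) (blk_nonempty π' j)) hmin'lt
      have hneeds : ∀ a, Needs π a j ↔ Needs π' a j := needs_transfer hm IH
      have hpn : Needs π p j := ⟨hparc.1, j, hparc, le_rfl⟩
      have hpn' : Needs π' p' j := ⟨hparc'.1, j, hparc', le_rfl⟩
      have hpp' : p = p' :=
        le_antisymm (needs_min hπ hparc p' ((hneeds p').2 hpn'))
          (needs_min hπ' hparc' p ((hneeds p).1 hpn))
      constructor
      · intro harc
        have : i = p := arc_left_unique harc hparc
        rw [this, hpp']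
        exact hparc'
      · intro harc
        have : i = p' := arc_left_unique harc hparc'
        rw [this, ← hpp']
        exact hparc
    · -- `j` is the minimum of its block in both partitions: no arcs into `j`
      have hms : msize π j = (blk π j).card := by
        apply msize_eq_card_of_min
        apply le_antisymm (min'_le _ _ (mem_blk π j))
        apply le_min'
        intro y hy
        by_contra hlt
        exact hmin ⟨y, hy, not_le.1 hlt⟩
      have hms1 : 1 ≤ msize π' j := by
        rw [← hm, hms]
        exact card_pos.2 (blk_nonempty π j)
      have hmin' : ¬∃ x ∈ blk π' j, x < j := by
        rintro ⟨x, hxb, hxj⟩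
        have := min_eq_of_msize_pos hms1
        exact absurd (this ▸ min'_le _ _ hxb) (not_le.2 hxj)
      exact iff_of_false (no_arc_into_min hmin) (no_arc_into_min hmin')

lemma sameBlock_comm {i j : Fin n} : SameBlock π i j ↔ SameBlock π j i := by
  constructor <;> rintro ⟨B, hB, h1, h2⟩ <;> exact ⟨B, hB, h2, h1⟩

lemma sameBlock_agree (harcs : ∀ j i : Fin n, IsArc π i j ↔ IsArc π' i j) :
    ∀ i j : Fin n, SameBlock π i j ↔ SameBlock π' i j := by
  have key : ∀ i j : Fin n, i ≤ j → (SameBlock π i j ↔ SameBlock π' i j) := by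
    intro i j hij
    have hble : blkLE π j = blkLE π' j := blkLE_agree j (fun b _ a => harcs b a)
    have h1 : SameBlock π i j ↔ i ∈ blkLE π j := by
      rw [sameBlock_comm, sameBlock_iff, blkLE, mem_filter]
      exact ⟨fun hh => ⟨hh, hij⟩, fun hh => hh.1⟩
    have h2 : SameBlock π' i j ↔ i ∈ blkLE π' j := by
      rw [sameBlock_comm, sameBlock_iff, blkLE, mem_filter]
      exact ⟨fun hh => ⟨hh, hij⟩, fun hh => hh.1⟩
    rw [h1, h2, hble]
  intro i j
  rcases le_total i j with hij | hji
  · exact key i j hij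
  · rw [sameBlock_comm, key j i hji, ← sameBlock_comm]

end Core

/-- A nonnesting partition of `[n]` is uniquely determined by the minima of its blocks
together with the sizes of the corresponding blocks: if `π` and `π'` are nonnesting
partitions such that for every `c` and every `s ≥ 1`, `π` has a block with minimum `c`
and cardinality `s` iff `π'` does, then `π = π'`. -/
theorem nonnesting_ext (n : ℕ) (π π' : Finpartition (Finset.univ : Finset (Fin n)))
    (hπ : IsNonnesting π) (hπ' : IsNonnesting π')
    (h : ∀ c : Fin n, ∀ s : ℕ, 1 ≤ s →
      ((∃ B ∈ π.parts, B.card = s ∧ ∃ hB : B.Nonempty, B.min' hB = c) ↔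
        (∃ B ∈ π'.parts, B.card = s ∧ ∃ hB : B.Nonempty, B.min' hB = c))) :
    π = π' := by
  have hm : ∀ c, msize π c = msize π' c := msize_transfer h
  have harcs : ∀ j i : Fin n, IsArc π i j ↔ IsArc π' i j :=
    fun j i => arcs_agree_aux hm hπ hπ' n j j.isLt i
  have hsb := sameBlock_agree harcs
  have hblk : ∀ b : Fin n, blk π b = blk π' b := by
    intro b
    ext x
    rw [← sameBlock_iff, ← sameBlock_iff]
    exact hsb b x
  apply Finpartition.ext
  ext B
  constructor
  · intro hB
    obtain ⟨b, hb⟩ := π.nonempty_of_mem_parts hB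
    have hBb : B = blk π b := (π.part_eq_of_mem hB hb).symm
    rw [hBb, hblk b]
    exact blk_mem π' b
  · intro hB
    obtain ⟨b, hb⟩ := π'.nonempty_of_mem_parts hB
    have hBb : B = blk π' b := (π'.part_eq_of_mem hB hb).symm
    rw [hBb, ← hblk b]
    exact blk_mem π b
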